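/- Let $V$ be a right vector space over the quaternions $\mathbb{H}$ and let $Q$ be a real quadratic form on $V$ (viewed as a real vector space). Then the average of $Q$ over the group $SU(2)$ of unit quaternions (acting by right multiplication) equals $\frac{1}{4}(Q(x) + Q(x\cdot i) + Q(x\cdot j) + Q(x\cdot k))$ for every $x \in V$. -/

import Mathlib

open MeasureTheory

/-- Borel measurable structure on the group `SU(2)` of unit quaternions. -/
noncomputable instance : MeasurableSpace (Metric.sphere (0 : Quaternion ℝ) 1) := borel _
instance : BorelSpace (Metric.sphere (0 : Quaternion ℝ) 1) := ⟨rfl⟩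

/-- The quaternion units `i`, `j`, `k`. -/
noncomputable def qi : Quaternion ℝ := ⟨0, 1, 0, 0⟩
noncomputable def qj : Quaternion ℝ := ⟨0, 0, 1, 0⟩
noncomputable def qk : Quaternion ℝ := ⟨0, 0, 0, 1⟩

open Quaternion MulOpposite in
lemma quat_decomp (q : Quaternion ℝ) :
    q = q.re • (1 : Quaternion ℝ) + q.imI • qi + q.imJ • qj + q.imK • qk := by
  apply Quaternion.ext <;> simp only [Quaternion.re_add, Quaternion.imI_add, Quaternion.imJ_add, Quaternion.imK_add, Quaternion.re_smul, Quaternion.imI_smul, Quaternion.imJ_smul, Quaternion.imK_smul, Quaternion.re_one, Quaternion.imI_one, Quaternion.imJ_one, Quaternion.imK_one] <;> simp [qi, qj, qk]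

open Quaternion MulOpposite in
lemma op_smul_decomp {V : Type*} [AddCommGroup V] [Module ℝ V] [Module (Quaternion ℝ)ᵐᵒᵖ V]
    [IsScalarTower ℝ (Quaternion ℝ)ᵐᵒᵖ V] (q : Quaternion ℝ) (x : V) :
    op q • x = q.re • x + q.imI • (op qi • x) + q.imJ • (op qj • x) + q.imK • (op qk • x) := by
  conv_lhs => rw [quat_decomp q]
  rw [op_add, op_add, op_add, op_smul, op_smul, op_smul, op_smul,
    add_smul, add_smul, add_smul, smul_assoc, smul_assoc, smul_assoc, smul_assoc, op_one, one_smul]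

lemma quad_add {V : Type*} [AddCommGroup V] [Module ℝ V] (Q : QuadraticForm ℝ V) (u v : V) :
    Q (u + v) = Q u + Q v + QuadraticMap.polar Q u v := by
  simp [QuadraticMap.polar]

open Quaternion MulOpposite in
lemma quad_expand {V : Type*} [AddCommGroup V] [Module ℝ V] [Module (Quaternion ℝ)ᵐᵒᵖ V]
    [IsScalarTower ℝ (Quaternion ℝ)ᵐᵒᵖ V] (Q : QuadraticForm ℝ V) (x : V) (q : Quaternion ℝ) :
    Q (op q • x) =
      q.re ^ 2 * Q x + q.imI ^ 2 * Q (op qi • x) + q.imJ ^ 2 * Q (op qj • x)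
        + q.imK ^ 2 * Q (op qk • x)
      + (q.re * q.imI) * QuadraticMap.polar Q x (op qi • x)
      + (q.re * q.imJ) * QuadraticMap.polar Q x (op qj • x)
      + (q.re * q.imK) * QuadraticMap.polar Q x (op qk • x)
      + (q.imI * q.imJ) * QuadraticMap.polar Q (op qi • x) (op qj • x)
      + (q.imI * q.imK) * QuadraticMap.polar Q (op qi • x) (op qk • x)
      + (q.imJ * q.imK) * QuadraticMap.polar Q (op qj • x) (op qk • x) := by
  rw [op_smul_decomp]
  simp only [quad_add, QuadraticMap.polar_add_left, QuadraticMap.polar_add_right,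
    QuadraticMap.polar_smul_left, QuadraticMap.polar_smul_right, QuadraticMap.map_smul,
    smul_eq_mul]
  ring

lemma qi_mem : qi ∈ Metric.sphere (0 : Quaternion ℝ) 1 := by
  have h : ‖qi‖ * ‖qi‖ = 1 := by
    rw [← Quaternion.normSq_eq_norm_mul_self, Quaternion.normSq_def']; simp [qi]
  have := norm_nonneg qi
  rw [mem_sphere_zero_iff_norm]; nlinarith

lemma qj_mem : qj ∈ Metric.sphere (0 : Quaternion ℝ) 1 := by
  have h : ‖qj‖ * ‖qj‖ = 1 := by
    rw [← Quaternion.normSq_eq_norm_mul_self, Quaternion.normSq_def']; simp [qj]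
  have := norm_nonneg qj
  rw [mem_sphere_zero_iff_norm]; nlinarith

lemma qk_mem : qk ∈ Metric.sphere (0 : Quaternion ℝ) 1 := by
  have h : ‖qk‖ * ‖qk‖ = 1 := by
    rw [← Quaternion.normSq_eq_norm_mul_self, Quaternion.normSq_def']; simp [qk]
  have := norm_nonneg qk
  rw [mem_sphere_zero_iff_norm]; nlinarith

/-- The unit quaternions `i`, `j`, `k` as elements of the unit sphere. -/
noncomputable def uI : Metric.sphere (0 : Quaternion ℝ) 1 := ⟨qi, qi_mem⟩
noncomputable def uJ : Metric.sphere (0 : Quaternion ℝ) 1 := ⟨qj, qj_mem⟩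
noncomputable def uK : Metric.sphere (0 : Quaternion ℝ) 1 := ⟨qk, qk_mem⟩

@[simp] lemma coe_uI : ((uI : Metric.sphere (0 : Quaternion ℝ) 1) : Quaternion ℝ) = qi := rfl
@[simp] lemma coe_uJ : ((uJ : Metric.sphere (0 : Quaternion ℝ) 1) : Quaternion ℝ) = qj := rfl
@[simp] lemma coe_uK : ((uK : Metric.sphere (0 : Quaternion ℝ) 1) : Quaternion ℝ) = qk := rfl
@[simp] lemma qi_re : qi.re = 0 := rfl
@[simp] lemma qi_imI : qi.imI = 1 := rfl
@[simp] lemma qi_imJ : qi.imJ = 0 := rfl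
@[simp] lemma qi_imK : qi.imK = 0 := rfl
@[simp] lemma qj_re : qj.re = 0 := rfl
@[simp] lemma qj_imI : qj.imI = 0 := rfl
@[simp] lemma qj_imJ : qj.imJ = 1 := rfl
@[simp] lemma qj_imK : qj.imK = 0 := rfl
@[simp] lemma qk_re : qk.re = 0 := rfl
@[simp] lemma qk_imI : qk.imI = 0 := rfl
@[simp] lemma qk_imJ : qk.imJ = 0 := rfl
@[simp] lemma qk_imK : qk.imK = 1 := rfl

/-- Splitting an integral of a sum of four functions. -/
lemma integral_add_four {α : Type*} [MeasurableSpace α] (μ : Measure α) (f1 f2 f3 f4 : α → ℝ)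
    (h1 : Integrable f1 μ) (h2 : Integrable f2 μ) (h3 : Integrable f3 μ)
    (h4 : Integrable f4 μ) :
    ∫ a, (f1 a + f2 a + f3 a + f4 a) ∂μ
      = (∫ a, f1 a ∂μ) + (∫ a, f2 a ∂μ) + (∫ a, f3 a ∂μ) + (∫ a, f4 a ∂μ) := by
  have h12 : Integrable (fun a => f1 a + f2 a) μ := h1.add h2
  have h123 : Integrable (fun a => f1 a + f2 a + f3 a) μ := h12.add h3
  rw [integral_add h123 h4, integral_add h12 h3, integral_add h1 h2]

/-- Splitting an integral of a sum of ten functions. -/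
lemma integral_add_ten {α : Type*} [MeasurableSpace α] (μ : Measure α)
    (f1 f2 f3 f4 f5 f6 f7 f8 f9 f10 : α → ℝ)
    (h1 : Integrable f1 μ) (h2 : Integrable f2 μ) (h3 : Integrable f3 μ)
    (h4 : Integrable f4 μ) (h5 : Integrable f5 μ) (h6 : Integrable f6 μ)
    (h7 : Integrable f7 μ) (h8 : Integrable f8 μ) (h9 : Integrable f9 μ)
    (h10 : Integrable f10 μ) :
    ∫ a, (f1 a + f2 a + f3 a + f4 a + f5 a + f6 a + f7 a + f8 a + f9 a + f10 a) ∂μ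
      = (∫ a, f1 a ∂μ) + (∫ a, f2 a ∂μ) + (∫ a, f3 a ∂μ) + (∫ a, f4 a ∂μ) + (∫ a, f5 a ∂μ)
        + (∫ a, f6 a ∂μ) + (∫ a, f7 a ∂μ) + (∫ a, f8 a ∂μ) + (∫ a, f9 a ∂μ)
        + (∫ a, f10 a ∂μ) := by
  have g2 : Integrable (fun a => f1 a + f2 a) μ := h1.add h2
  have g3 : Integrable (fun a => f1 a + f2 a + f3 a) μ := g2.add h3
  have g4 : Integrable (fun a => f1 a + f2 a + f3 a + f4 a) μ := g3.add h4
  have g5 : Integrable (fun a => f1 a + f2 a + f3 a + f4 a + f5 a) μ := g4.add h5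
  have g6 : Integrable (fun a => f1 a + f2 a + f3 a + f4 a + f5 a + f6 a) μ := g5.add h6
  have g7 : Integrable (fun a => f1 a + f2 a + f3 a + f4 a + f5 a + f6 a + f7 a) μ := g6.add h7
  have g8 : Integrable (fun a => f1 a + f2 a + f3 a + f4 a + f5 a + f6 a + f7 a + f8 a) μ :=
    g7.add h8
  have g9 : Integrable
      (fun a => f1 a + f2 a + f3 a + f4 a + f5 a + f6 a + f7 a + f8 a + f9 a) μ := g8.add h9
  rw [integral_add g9 h10, integral_add g8 h9, integral_add g7 h8, integral_add g6 h7,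
    integral_add g5 h6, integral_add g4 h5, integral_add g3 h4, integral_add g2 h3,
    integral_add h1 h2]

/-- The average over `SU(2)` (with respect to the Haar probability measure) of a real
quadratic form `Q` on a right quaternionic vector space `V` equals
`(1/4)(Q(x) + Q(x·i) + Q(x·j) + Q(x·k))`. The right action of a quaternion `q` on `V` is
`MulOpposite.op q • x`. -/
theorem average_over_SU2_of_quadratic_form
    (V : Type*) [AddCommGroup V] [Module ℝ V] [Module (Quaternion ℝ)ᵐᵒᵖ V]
    [IsScalarTower ℝ (Quaternion ℝ)ᵐᵒᵖ V]
    (Q : QuadraticForm ℝ V)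
    (μ : Measure (Metric.sphere (0 : Quaternion ℝ) 1))
    [μ.IsHaarMeasure] [IsProbabilityMeasure μ] (x : V) :
    (∫ L : Metric.sphere (0 : Quaternion ℝ) 1, Q (MulOpposite.op (L : Quaternion ℝ) • x) ∂μ)
      = (1 / 4) * (Q x + Q (MulOpposite.op qi • x) + Q (MulOpposite.op qj • x)
          + Q (MulOpposite.op qk • x)) := by
  classical
  -- coordinate functions
  have hca : Continuous fun L : Metric.sphere (0 : Quaternion ℝ) 1 => (L : Quaternion ℝ).re :=
    Quaternion.continuous_re.comp continuous_subtype_val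
  have hcb : Continuous fun L : Metric.sphere (0 : Quaternion ℝ) 1 => (L : Quaternion ℝ).imI :=
    Quaternion.continuous_imI.comp continuous_subtype_val
  have hcc : Continuous fun L : Metric.sphere (0 : Quaternion ℝ) 1 => (L : Quaternion ℝ).imJ :=
    Quaternion.continuous_imJ.comp continuous_subtype_val
  have hcd : Continuous fun L : Metric.sphere (0 : Quaternion ℝ) 1 => (L : Quaternion ℝ).imK :=
    Quaternion.continuous_imK.comp continuous_subtype_val
  have hC : ∀ f : Metric.sphere (0 : Quaternion ℝ) 1 → ℝ, Continuous f → Integrable f μ :=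
    fun f hf => integrableOn_univ.mp (hf.continuousOn.integrableOn_compact isCompact_univ)
  -- invariance helpers
  have hswap : ∀ (g : Metric.sphere (0 : Quaternion ℝ) 1)
      (f h : Metric.sphere (0 : Quaternion ℝ) 1 → ℝ), (∀ L, f (g * L) = h L) →
      ∫ L, h L ∂μ = ∫ L, f L ∂μ := by
    intro g f h hfh
    rw [show (fun L => h L) = fun L => f (g * L) from funext fun L => (hfh L).symm]
    exact integral_mul_left_eq_self (μ := μ) f g
  have hzero : ∀ (g : Metric.sphere (0 : Quaternion ℝ) 1)
      (f : Metric.sphere (0 : Quaternion ℝ) 1 → ℝ), (∀ L, f (g * L) = - f L) →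
      ∫ L, f L ∂μ = 0 := by
    intro g f hneg
    have h1 := integral_mul_left_eq_self (μ := μ) f g
    rw [show (fun L => f (g * L)) = fun L => -(f L) from funext hneg, integral_neg] at h1
    linarith
  -- norm-one relation
  have hsum : ∀ L : Metric.sphere (0 : Quaternion ℝ) 1,
      (L : Quaternion ℝ).re ^ 2 + (L : Quaternion ℝ).imI ^ 2
      + (L : Quaternion ℝ).imJ ^ 2 + (L : Quaternion ℝ).imK ^ 2 = 1 := by
    intro L
    have h2 : ‖(L : Quaternion ℝ)‖ = 1 := mem_sphere_zero_iff_norm.mp L.2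
    have h := Quaternion.normSq_eq_norm_mul_self (L : Quaternion ℝ)
    rw [h2, mul_one, Quaternion.normSq_def'] at h
    linarith
  -- integrability
  have iaa : Integrable (fun L : Metric.sphere (0 : Quaternion ℝ) 1 =>
      (L : Quaternion ℝ).re ^ 2) μ := hC _ (hca.pow 2)
  have ibb : Integrable (fun L : Metric.sphere (0 : Quaternion ℝ) 1 =>
      (L : Quaternion ℝ).imI ^ 2) μ := hC _ (hcb.pow 2)
  have icc : Integrable (fun L : Metric.sphere (0 : Quaternion ℝ) 1 =>
      (L : Quaternion ℝ).imJ ^ 2) μ := hC _ (hcc.pow 2)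
  have idd : Integrable (fun L : Metric.sphere (0 : Quaternion ℝ) 1 =>
      (L : Quaternion ℝ).imK ^ 2) μ := hC _ (hcd.pow 2)
  have iab : Integrable (fun L : Metric.sphere (0 : Quaternion ℝ) 1 =>
      (L : Quaternion ℝ).re * (L : Quaternion ℝ).imI) μ := hC _ (hca.mul hcb)
  have iac : Integrable (fun L : Metric.sphere (0 : Quaternion ℝ) 1 =>
      (L : Quaternion ℝ).re * (L : Quaternion ℝ).imJ) μ := hC _ (hca.mul hcc)
  have iad : Integrable (fun L : Metric.sphere (0 : Quaternion ℝ) 1 =>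
      (L : Quaternion ℝ).re * (L : Quaternion ℝ).imK) μ := hC _ (hca.mul hcd)
  have ibc : Integrable (fun L : Metric.sphere (0 : Quaternion ℝ) 1 =>
      (L : Quaternion ℝ).imI * (L : Quaternion ℝ).imJ) μ := hC _ (hcb.mul hcc)
  have ibd : Integrable (fun L : Metric.sphere (0 : Quaternion ℝ) 1 =>
      (L : Quaternion ℝ).imI * (L : Quaternion ℝ).imK) μ := hC _ (hcb.mul hcd)
  have icd : Integrable (fun L : Metric.sphere (0 : Quaternion ℝ) 1 =>
      (L : Quaternion ℝ).imJ * (L : Quaternion ℝ).imK) μ := hC _ (hcc.mul hcd)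
  -- square integrals all equal
  have e1 : ∫ L, (L : Quaternion ℝ).imI ^ 2 ∂μ = ∫ L, (L : Quaternion ℝ).re ^ 2 ∂μ := by
    refine hswap uI (fun L => (L : Quaternion ℝ).re ^ 2) _ fun L => ?_
    have h : ((uI * L : _) : Quaternion ℝ).re = -(L : Quaternion ℝ).imI := by
      rw [Metric.unitSphere.coe_mul]; simp [Quaternion.re_mul]
    show ((uI * L : _) : Quaternion ℝ).re ^ 2 = (L : Quaternion ℝ).imI ^ 2
    rw [h]; ring
  have e2 : ∫ L, (L : Quaternion ℝ).imJ ^ 2 ∂μ = ∫ L, (L : Quaternion ℝ).re ^ 2 ∂μ := by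
    refine hswap uJ (fun L => (L : Quaternion ℝ).re ^ 2) _ fun L => ?_
    have h : ((uJ * L : _) : Quaternion ℝ).re = -(L : Quaternion ℝ).imJ := by
      rw [Metric.unitSphere.coe_mul]; simp [Quaternion.re_mul]
    show ((uJ * L : _) : Quaternion ℝ).re ^ 2 = (L : Quaternion ℝ).imJ ^ 2
    rw [h]; ring
  have e3 : ∫ L, (L : Quaternion ℝ).imK ^ 2 ∂μ = ∫ L, (L : Quaternion ℝ).re ^ 2 ∂μ := by
    refine hswap uK (fun L => (L : Quaternion ℝ).re ^ 2) _ fun L => ?_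
    have h : ((uK * L : _) : Quaternion ℝ).re = -(L : Quaternion ℝ).imK := by
      rw [Metric.unitSphere.coe_mul]; simp [Quaternion.re_mul]
    show ((uK * L : _) : Quaternion ℝ).re ^ 2 = (L : Quaternion ℝ).imK ^ 2
    rw [h]; ring
  have etot : (∫ L, (L : Quaternion ℝ).re ^ 2 ∂μ) + (∫ L, (L : Quaternion ℝ).imI ^ 2 ∂μ)
      + (∫ L, (L : Quaternion ℝ).imJ ^ 2 ∂μ) + (∫ L, (L : Quaternion ℝ).imK ^ 2 ∂μ) = 1 := by
    rw [← integral_add_four μ _ _ _ _ iaa ibb icc idd]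
    rw [show (fun L : Metric.sphere (0 : Quaternion ℝ) 1 => (L : Quaternion ℝ).re ^ 2
        + (L : Quaternion ℝ).imI ^ 2 + (L : Quaternion ℝ).imJ ^ 2 + (L : Quaternion ℝ).imK ^ 2)
        = fun _ => (1 : ℝ) from funext hsum]
    simp
  have hsa : ∫ L, (L : Quaternion ℝ).re ^ 2 ∂μ = 1 / 4 := by linarith
  have hsb : ∫ L, (L : Quaternion ℝ).imI ^ 2 ∂μ = 1 / 4 := by linarith
  have hsc : ∫ L, (L : Quaternion ℝ).imJ ^ 2 ∂μ = 1 / 4 := by linarith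
  have hsd : ∫ L, (L : Quaternion ℝ).imK ^ 2 ∂μ = 1 / 4 := by linarith
  -- cross terms vanish
  have hab : ∫ L, (L : Quaternion ℝ).re * (L : Quaternion ℝ).imI ∂μ = 0 := by
    refine hzero uI _ fun L => ?_
    show ((uI * L : _) : Quaternion ℝ).re * ((uI * L : _) : Quaternion ℝ).imI
      = -((L : Quaternion ℝ).re * (L : Quaternion ℝ).imI)
    rw [Metric.unitSphere.coe_mul]
    simp [Quaternion.re_mul, Quaternion.imI_mul]
    ring
  have hcd' : ∫ L, (L : Quaternion ℝ).imJ * (L : Quaternion ℝ).imK ∂μ = 0 := by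
    refine hzero uI _ fun L => ?_
    show ((uI * L : _) : Quaternion ℝ).imJ * ((uI * L : _) : Quaternion ℝ).imK
      = -((L : Quaternion ℝ).imJ * (L : Quaternion ℝ).imK)
    rw [Metric.unitSphere.coe_mul]
    simp [Quaternion.imJ_mul, Quaternion.imK_mul]
    ring
  have hac : ∫ L, (L : Quaternion ℝ).re * (L : Quaternion ℝ).imJ ∂μ = 0 := by
    refine hzero uJ _ fun L => ?_
    show ((uJ * L : _) : Quaternion ℝ).re * ((uJ * L : _) : Quaternion ℝ).imJ
      = -((L : Quaternion ℝ).re * (L : Quaternion ℝ).imJ)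
    rw [Metric.unitSphere.coe_mul]
    simp [Quaternion.re_mul, Quaternion.imJ_mul]
    ring
  have hbd : ∫ L, (L : Quaternion ℝ).imI * (L : Quaternion ℝ).imK ∂μ = 0 := by
    refine hzero uJ _ fun L => ?_
    show ((uJ * L : _) : Quaternion ℝ).imI * ((uJ * L : _) : Quaternion ℝ).imK
      = -((L : Quaternion ℝ).imI * (L : Quaternion ℝ).imK)
    rw [Metric.unitSphere.coe_mul]
    simp [Quaternion.imI_mul, Quaternion.imK_mul]
    ring
  have had : ∫ L, (L : Quaternion ℝ).re * (L : Quaternion ℝ).imK ∂μ = 0 := by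
    refine hzero uK _ fun L => ?_
    show ((uK * L : _) : Quaternion ℝ).re * ((uK * L : _) : Quaternion ℝ).imK
      = -((L : Quaternion ℝ).re * (L : Quaternion ℝ).imK)
    rw [Metric.unitSphere.coe_mul]
    simp [Quaternion.re_mul, Quaternion.imK_mul]
    ring
  have hbc : ∫ L, (L : Quaternion ℝ).imI * (L : Quaternion ℝ).imJ ∂μ = 0 := by
    refine hzero uK _ fun L => ?_
    show ((uK * L : _) : Quaternion ℝ).imI * ((uK * L : _) : Quaternion ℝ).imJ
      = -((L : Quaternion ℝ).imI * (L : Quaternion ℝ).imJ)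
    rw [Metric.unitSphere.coe_mul]
    simp [Quaternion.imI_mul, Quaternion.imJ_mul]
    ring
  -- final assembly
  have hQ : ∀ L : Metric.sphere (0 : Quaternion ℝ) 1,
      Q (MulOpposite.op (L : Quaternion ℝ) • x) =
      (L : Quaternion ℝ).re ^ 2 * Q x
      + (L : Quaternion ℝ).imI ^ 2 * Q (MulOpposite.op qi • x)
      + (L : Quaternion ℝ).imJ ^ 2 * Q (MulOpposite.op qj • x)
      + (L : Quaternion ℝ).imK ^ 2 * Q (MulOpposite.op qk • x)
      + ((L : Quaternion ℝ).re * (L : Quaternion ℝ).imI)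
          * QuadraticMap.polar Q x (MulOpposite.op qi • x)
      + ((L : Quaternion ℝ).re * (L : Quaternion ℝ).imJ)
          * QuadraticMap.polar Q x (MulOpposite.op qj • x)
      + ((L : Quaternion ℝ).re * (L : Quaternion ℝ).imK)
          * QuadraticMap.polar Q x (MulOpposite.op qk • x)
      + ((L : Quaternion ℝ).imI * (L : Quaternion ℝ).imJ)
          * QuadraticMap.polar Q (MulOpposite.op qi • x) (MulOpposite.op qj • x)
      + ((L : Quaternion ℝ).imI * (L : Quaternion ℝ).imK)
          * QuadraticMap.polar Q (MulOpposite.op qi • x) (MulOpposite.op qk • x)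
      + ((L : Quaternion ℝ).imJ * (L : Quaternion ℝ).imK)
          * QuadraticMap.polar Q (MulOpposite.op qj • x) (MulOpposite.op qk • x) :=
    fun L => quad_expand Q x (L : Quaternion ℝ)
  simp only [hQ]
  rw [integral_add_ten μ _ _ _ _ _ _ _ _ _ _ (iaa.mul_const _) (ibb.mul_const _)
    (icc.mul_const _) (idd.mul_const _) (iab.mul_const _) (iac.mul_const _) (iad.mul_const _)
    (ibc.mul_const _) (ibd.mul_const _) (icd.mul_const _)]
  simp only [integral_mul_const]
  rw [hsa, hsb, hsc, hsd, hab, hac, had, hbc, hbd, hcd']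
  ring
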